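/- For nonzero complex numbers x_1,...,x_N, y_1,...,y_N with x_i ≠ y_j for all i,j, pairwise distinct within each family, and any complex u: det[ 1/(y_j − x_i) + u/x_i + u·y_j/x_i^2 ]_{i,j=1}^N = det[ 1/(y_j − x_i) ]_{i,j=1}^N · [ 1 − 2u(1 − ∏_i y_i/x_i) − (u − u^2)·(∏_i y_i/x_i)·(∑_i (1/x_i − 1/y_i))·(∑_i (x_i − y_i)) + u^2·(∏_i y_i/x_i − 1)^2 ]. -/

import Mathlib

open Finset Polynomial
namespace S8

variable {N : ℕ}

noncomputable def Lp (y : Fin N → ℂ) (j : Fin N) : Polynomial ℂ :=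
  ∏ k ∈ univ.erase j, (X - Polynomial.C (y k))

noncomputable def interp (y : Fin N → ℂ) (v : Fin N → ℂ) : Polynomial ℂ :=
  ∑ j, Polynomial.C (v j) * Lp y j

noncomputable def PPd (x y : Fin N → ℂ) : ℂ := ∏ i, y i / x i
noncomputable def Bd (y : Fin N → ℂ) (j : Fin N) : ℂ := ∏ k ∈ univ.erase j, (y j - y k)
noncomputable def Ae (x y : Fin N → ℂ) (j : Fin N) : ℂ := ∏ i, (y j - x i)
noncomputable def S1v (x y : Fin N → ℂ) : ℂ := ∑ i, (1 / x i - 1 / y i)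
noncomputable def wv (x y : Fin N → ℂ) : Fin N → ℂ :=
  fun j => PPd x y * Ae x y j / (y j * Bd y j)
noncomputable def zv (x y : Fin N → ℂ) : Fin N → ℂ :=
  fun j => PPd x y * Ae x y j * (S1v x y * y j + 1) / (y j ^ 2 * Bd y j)
noncomputable def PBp (y : Fin N → ℂ) : Polynomial ℂ := ∏ j, (X - Polynomial.C (y j))

section basics
variable (y : Fin N → ℂ)

lemma eval_Lp (j : Fin N) (t : ℂ) :
    (Lp y j).eval t = ∏ k ∈ univ.erase j, (t - y k) := by
  simp [Lp, Polynomial.eval_prod]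

lemma natDegree_Lp (j : Fin N) : (Lp y j).natDegree = N - 1 := by
  rw [Lp, Polynomial.natDegree_prod _ _ (fun k _ => X_sub_C_ne_zero (y k))]
  simp [Finset.card_erase_of_mem]

lemma monic_Lp (j : Fin N) : (Lp y j).Monic :=
  monic_prod_of_monic _ _ fun k _ => monic_X_sub_C (y k)

lemma interp_natDegree (v : Fin N → ℂ) : (interp y v).natDegree ≤ N - 1 := by
  refine Polynomial.natDegree_sum_le_of_forall_le _ _ fun j _ => ?_
  refine (Polynomial.natDegree_mul_le).trans ?_
  simp [natDegree_Lp]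

lemma interp_eval_node (v : Fin N → ℂ) (m : Fin N) :
    (interp y v).eval (y m) = v m * Bd y m := by
  rw [interp, Polynomial.eval_finset_sum, Finset.sum_eq_single m]
  · simp [eval_Lp, Bd]
  · intro j _ hjm
    have : (Lp y j).eval (y m) = 0 := by
      rw [eval_Lp]
      exact Finset.prod_eq_zero (Finset.mem_erase.mpr ⟨Ne.symm hjm, Finset.mem_univ m⟩)
        (sub_self _)
    simp [this]
  · simp

lemma interp_coeff (v : Fin N → ℂ) :
    (interp y v).coeff (N - 1) = ∑ j, v j := by
  rw [interp, Polynomial.finset_sum_coeff]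
  refine Finset.sum_congr rfl fun j _ => ?_
  rw [Polynomial.coeff_C_mul]
  have : (Lp y j).coeff (N - 1) = 1 := by
    have h := (monic_Lp y j).coeff_natDegree
    rwa [natDegree_Lp] at h
  rw [this, mul_one]

lemma pairing (v : Fin N → ℂ) (t : ℂ) (ht : ∀ k, y k ≠ t) :
    (∏ k, (t - y k)) * (∑ j, v j / (y j - t)) = - (interp y v).eval t := by
  rw [Finset.mul_sum, interp, Polynomial.eval_finset_sum, ← Finset.sum_neg_distrib]
  refine Finset.sum_congr rfl fun j _ => ?_
  rw [Polynomial.eval_mul, Polynomial.eval_C, eval_Lp,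
    ← Finset.mul_prod_erase univ _ (Finset.mem_univ j)]
  have h : y j - t ≠ 0 := sub_ne_zero.mpr (ht j)
  field_simp
  ring

lemma natDegree_PBp : (PBp y).natDegree = N := by
  rw [PBp, Polynomial.natDegree_prod _ _ (fun k _ => X_sub_C_ne_zero (y k))]
  simp

lemma monic_PBp : (PBp y).Monic :=
  monic_prod_of_monic _ _ fun k _ => monic_X_sub_C (y k)

lemma eval_PBp (t : ℂ) : (PBp y).eval t = ∏ j, (t - y j) := by
  simp [PBp, Polynomial.eval_prod]

end basics

variable {x y : Fin N → ℂ}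

lemma Bd_ne (hyinj : Function.Injective y) (j : Fin N) : Bd y j ≠ 0 := by
  rw [Bd, Finset.prod_ne_zero_iff]
  exact fun k hk => sub_ne_zero.mpr fun h => (Finset.mem_erase.mp hk).1 (hyinj h.symm)

lemma Ae_ne (hxy : ∀ i j, x i ≠ y j) (j : Fin N) : Ae x y j ≠ 0 := by
  rw [Ae, Finset.prod_ne_zero_iff]
  exact fun i _ => sub_ne_zero.mpr (Ne.symm (hxy i j))

lemma PBx_ne (hxy : ∀ i j, x i ≠ y j) (i : Fin N) : ∏ k, (x i - y k) ≠ 0 := by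
  rw [Finset.prod_ne_zero_iff]
  exact fun k _ => sub_ne_zero.mpr (hxy i k)

lemma PP_prod_zero_sub (hx : ∀ i, x i ≠ 0) :
    PPd x y * ∏ i, ((0:ℂ) - x i) = ∏ i, ((0:ℂ) - y i) := by
  rw [PPd, ← Finset.prod_mul_distrib]
  refine Finset.prod_congr rfl fun i _ => ?_
  rw [div_mul_eq_mul_div, div_eq_iff (hx i)]
  ring

-- the fundamental identity for w
lemma Qzero (hN : 0 < N) (hyinj : Function.Injective y)
    (hx : ∀ i, x i ≠ 0) (hy : ∀ j, y j ≠ 0) (hxy : ∀ i j, x i ≠ y j) :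
    X * interp y (wv x y) + PBp y - Polynomial.C (PPd x y) * PBp x = 0 := by
  set Q := X * interp y (wv x y) + PBp y - Polynomial.C (PPd x y) * PBp x with hQ
  have hs : ((insert (0:ℂ) (univ.image y)).card = N + 1) := by
    rw [Finset.card_insert_of_notMem, Finset.card_image_of_injective _ hyinj]
    · simp
    · simp only [Finset.mem_image]
      rintro ⟨j, -, hj⟩
      exact hy j hj
  refine Polynomial.eq_zero_of_natDegree_lt_card_of_eval_eq_zero' Q (insert (0:ℂ) (univ.image y)) ?_ ?_
  · intro r hr
    rcases Finset.mem_insert.mp hr with rfl | hr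
    · simp only [hQ, Polynomial.eval_sub, Polynomial.eval_add, Polynomial.eval_mul,
        Polynomial.eval_X, Polynomial.eval_C, zero_mul, zero_add, eval_PBp]
      rw [← PP_prod_zero_sub (x := x) (y := y) hx]
      ring
    · obtain ⟨m, -, rfl⟩ := Finset.mem_image.mp hr
      simp only [hQ, Polynomial.eval_sub, Polynomial.eval_add, Polynomial.eval_mul,
        Polynomial.eval_X, Polynomial.eval_C, eval_PBp, interp_eval_node]
      have h1 : ∏ j, (y m - y j) = 0 :=
        Finset.prod_eq_zero (Finset.mem_univ m) (sub_self _)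
      rw [h1, add_zero, wv]
      have h2 : Ae x y m = ∏ i, (y m - x i) := rfl
      rw [← h2]
      field_simp [Bd_ne hyinj m, hy m]
      ring
  · rw [hs]
    have h1 : (X * interp y (wv x y)).natDegree ≤ N := by
      refine Polynomial.natDegree_mul_le.trans ?_
      have := interp_natDegree y (wv x y)
      simp only [Polynomial.natDegree_X]
      omega
    have h2 : (X * interp y (wv x y) + PBp y).natDegree ≤ N := by
      refine (Polynomial.natDegree_add_le _ _).trans ?_
      simp [h1, natDegree_PBp]
    refine lt_of_le_of_lt ?_ (Nat.lt_succ_self N)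
    refine (Polynomial.natDegree_sub_le _ _).trans ?_
    simp only [max_le_iff]
    refine ⟨h2, Polynomial.natDegree_mul_le.trans ?_⟩
    simp [natDegree_PBp]



lemma natDegree_le_pred {p : Polynomial ℂ} {n : ℕ} (h : p.natDegree ≤ n)
    (hc : p.coeff n = 0) : p.natDegree ≤ n - 1 := by
  rcases lt_or_eq_of_le h with h' | h'
  · omega
  · have hl : p.leadingCoeff = 0 := by rw [Polynomial.leadingCoeff, h', hc]
    rw [Polynomial.leadingCoeff_eq_zero] at hl
    simp [hl]

lemma E1 (hN : 0 < N) (hyinj : Function.Injective y) (hx : ∀ i, x i ≠ 0)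
    (hy : ∀ j, y j ≠ 0) (hxy : ∀ i j, x i ≠ y j) (i : Fin N) :
    ∑ j, wv x y j / (y j - x i) = 1 / x i := by
  have hQ := Qzero hN hyinj hx hy hxy
  have heval := congrArg (Polynomial.eval (x i)) hQ
  simp only [Polynomial.eval_sub, Polynomial.eval_add, Polynomial.eval_mul,
    Polynomial.eval_X, Polynomial.eval_C, Polynomial.eval_zero, eval_PBp] at heval
  have h0 : ∏ k, (x i - x k) = 0 := Finset.prod_eq_zero (Finset.mem_univ i) (sub_self _)
  rw [h0, mul_zero, sub_zero] at heval
  have hp := pairing y (wv x y) (x i) (fun k => Ne.symm (hxy i k))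
  apply mul_left_cancel₀ (PBx_ne hxy i)
  rw [hp, mul_one_div, eq_div_iff (hx i)]
  linear_combination -heval

lemma E3 (hN : 0 < N) (hyinj : Function.Injective y) (hx : ∀ i, x i ≠ 0)
    (hy : ∀ j, y j ≠ 0) (hxy : ∀ i j, x i ≠ y j) :
    ∑ j, wv x y j = PPd x y - 1 := by
  have hQ := Qzero hN hyinj hx hy hxy
  have hc := congrArg (fun p : Polynomial ℂ => p.coeff N) hQ
  simp only [Polynomial.coeff_sub, Polynomial.coeff_add, Polynomial.coeff_C_mul,
    Polynomial.coeff_zero] at hc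
  obtain ⟨M, rfl⟩ : ∃ M, N = M + 1 := ⟨N - 1, by omega⟩
  have h1 : (X * interp y (wv x y)).coeff (M + 1) = ∑ j, wv x y j := by
    rw [Polynomial.coeff_X_mul]
    have h := interp_coeff y (wv x y)
    simpa using h
  have h2 : (PBp y).coeff (M + 1) = 1 := by
    have h := (monic_PBp y).coeff_natDegree; rwa [natDegree_PBp] at h
  have h3 : (PBp x).coeff (M + 1) = 1 := by
    have h := (monic_PBp x).coeff_natDegree; rwa [natDegree_PBp] at h
  rw [h1, h2, h3, mul_one] at hc
  linear_combination hc

lemma E5 (hN : 0 < N) (hxinj : Function.Injective x) (hyinj : Function.Injective y)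
    (hxy : ∀ i j, x i ≠ y j) :
    (Matrix.of fun i j : Fin N => 1 / (y j - x i)).det ≠ 0 := by
  intro hdet
  obtain ⟨v, hv, hmul⟩ := Matrix.exists_mulVec_eq_zero_iff.mpr hdet
  have hp : interp y v = 0 := by
    apply Polynomial.eq_zero_of_natDegree_lt_card_of_eval_eq_zero' _ (univ.image x)
    · intro r hr
      obtain ⟨i, -, rfl⟩ := Finset.mem_image.mp hr
      have h1 : (0:ℂ) = ∑ j, (1 / (y j - x i)) * v j := by
        have := congrFun hmul i
        simpa [Matrix.mulVec, dotProduct] using this.symm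
      have h2 : ∑ j, v j / (y j - x i) = 0 := by
        rw [show ∑ j, v j / (y j - x i) = ∑ j, (1 / (y j - x i)) * v j from
          Finset.sum_congr rfl fun j _ => by rw [div_eq_mul_inv, one_div, mul_comm]]
        exact h1.symm
      have hpair := pairing y v (x i) (fun k => Ne.symm (hxy i k))
      rw [h2, mul_zero] at hpair
      exact neg_eq_zero.mp hpair.symm
    · rw [Finset.card_image_of_injective _ hxinj, Finset.card_univ, Fintype.card_fin]
      have := interp_natDegree y v
      omega
  apply hv
  funext j
  have h := interp_eval_node y v j
  rw [hp] at h
  simp only [Polynomial.eval_zero] at h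
  rcases mul_eq_zero.mp h.symm with h' | h'
  · exact h'
  · exact absurd h' (Bd_ne hyinj j)

lemma derivative_prod_X_sub_C {ι : Type*} [DecidableEq ι] (s : Finset ι) (f : ι → ℂ) :
    Polynomial.derivative (∏ i ∈ s, (X - Polynomial.C (f i))) =
      ∑ i ∈ s, ∏ k ∈ s.erase i, (X - Polynomial.C (f k)) := by
  induction s using Finset.induction_on with
  | empty => simp
  | @insert a s ha ih =>
    have h1 : Polynomial.derivative (X - Polynomial.C (f a)) = 1 := by simp
    rw [Finset.prod_insert ha, Polynomial.derivative_mul, ih, Finset.sum_insert ha,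
      Finset.erase_insert ha, h1, one_mul, Finset.mul_sum]
    congr 1
    refine Finset.sum_congr rfl fun i hi => ?_
    rw [Finset.erase_insert_of_ne (by rintro rfl; exact ha hi),
      Finset.prod_insert (fun h => ha (Finset.mem_of_mem_erase h))]

lemma deriv_eval_zero (f : Fin N → ℂ) (hf : ∀ i, f i ≠ 0) :
    (Polynomial.derivative (∏ i, (X - Polynomial.C (f i)))).eval 0
      = (∏ i, ((0:ℂ) - f i)) * (- ∑ i, 1 / f i) := by
  rw [derivative_prod_X_sub_C univ f, Polynomial.eval_finset_sum]
  have hterm : ∀ j ∈ univ, (∏ k ∈ univ.erase j, (X - Polynomial.C (f k))).eval 0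
      = (∏ i, ((0:ℂ) - f i)) * (-(1 / f j)) := by
    intro j _
    rw [Polynomial.eval_prod]
    simp only [Polynomial.eval_sub, Polynomial.eval_X, Polynomial.eval_C]
    rw [← Finset.mul_prod_erase univ (fun k => (0:ℂ) - f k) (Finset.mem_univ j)]
    field_simp [hf j]
    ring
  rw [Finset.sum_congr rfl hterm, ← Finset.mul_sum]
  congr 1
  rw [← Finset.sum_neg_distrib]

lemma Q2zero (hN : 0 < N) (hyinj : Function.Injective y) (hx : ∀ i, x i ≠ 0)
    (hy : ∀ j, y j ≠ 0) (hxy : ∀ i j, x i ≠ y j) :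
    X ^ 2 * interp y (zv x y) + (PBp y + PBp x *
      (Polynomial.C (-(PPd x y * S1v x y)) * X + Polynomial.C (-(PPd x y)))) = 0 := by
  have hS1 : S1v x y = (∑ i, 1 / x i) - ∑ i, 1 / y i := by
    rw [S1v, Finset.sum_sub_distrib]
  have hdvd : X ^ 2 ∣ (PBp y + PBp x *
      (Polynomial.C (-(PPd x y * S1v x y)) * X + Polynomial.C (-(PPd x y)))) := by
    rw [Polynomial.X_pow_dvd_iff]
    intro d hd
    interval_cases d
    · rw [Polynomial.coeff_zero_eq_eval_zero]
      simp only [Polynomial.eval_add, Polynomial.eval_mul, Polynomial.eval_C,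
        Polynomial.eval_X, eval_PBp, mul_zero, zero_add]
      rw [← PP_prod_zero_sub (x := x) (y := y) hx]
      ring
    · have hc : (PBp y + PBp x * (Polynomial.C (-(PPd x y * S1v x y)) * X
          + Polynomial.C (-(PPd x y)))).coeff 1
          = (Polynomial.derivative (PBp y + PBp x * (Polynomial.C (-(PPd x y * S1v x y)) * X
          + Polynomial.C (-(PPd x y))))).eval 0 := by
        rw [← Polynomial.coeff_zero_eq_eval_zero, Polynomial.coeff_derivative]
        push_cast
        ring
      rw [hc, Polynomial.derivative_add, Polynomial.derivative_mul]
      have hd1 : Polynomial.derivative (Polynomial.C (-(PPd x y * S1v x y)) * X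
          + Polynomial.C (-(PPd x y))) = Polynomial.C (-(PPd x y * S1v x y)) := by
        simp
      rw [hd1]
      simp only [Polynomial.eval_add, Polynomial.eval_mul, Polynomial.eval_C,
        Polynomial.eval_X, eval_PBp, mul_zero, zero_add]
      have hdy := deriv_eval_zero y hy
      have hdx := deriv_eval_zero x hx
      rw [PBp, PBp, hdy, hdx, ← PP_prod_zero_sub (x := x) (y := y) hx, hS1]
      ring
  obtain ⟨g, hg⟩ := hdvd
  have hgdeg : g.natDegree ≤ N - 1 := by
    rcases eq_or_ne g 0 with rfl | hg0
    · simp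
    · have hhdeg : (PBp y + PBp x * (Polynomial.C (-(PPd x y * S1v x y)) * X
          + Polynomial.C (-(PPd x y)))).natDegree ≤ N + 1 := by
        refine (Polynomial.natDegree_add_le _ _).trans ?_
        rw [max_le_iff]
        constructor
        · rw [natDegree_PBp]; omega
        · refine Polynomial.natDegree_mul_le.trans ?_
          have h1 : (Polynomial.C (-(PPd x y * S1v x y)) * X
              + Polynomial.C (-(PPd x y))).natDegree ≤ 1 := by
            refine (Polynomial.natDegree_add_le _ _).trans ?_
            rw [max_le_iff]
            refine ⟨(Polynomial.natDegree_C_mul_le _ _).trans ?_, ?_⟩ <;> simp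
          rw [natDegree_PBp]
          omega
      rw [hg, Polynomial.natDegree_mul (pow_ne_zero 2 Polynomial.X_ne_zero) hg0,
        Polynomial.natDegree_pow, Polynomial.natDegree_X] at hhdeg
      omega
  have hsum : interp y (zv x y) + g = 0 := by
    apply Polynomial.eq_zero_of_natDegree_lt_card_of_eval_eq_zero' _ (univ.image y)
    · intro r hr
      obtain ⟨m, -, rfl⟩ := Finset.mem_image.mp hr
      have hym2 : (y m) ^ 2 ≠ 0 := pow_ne_zero _ (hy m)
      have hgm : (y m) ^ 2 * g.eval (y m)
          = Ae x y m * (-(PPd x y * S1v x y) * y m + -(PPd x y)) := by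
        have h := congrArg (Polynomial.eval (y m)) hg
        simp only [Polynomial.eval_add, Polynomial.eval_mul, Polynomial.eval_pow,
          Polynomial.eval_X, Polynomial.eval_C, eval_PBp] at h
        have h0 : ∏ j, (y m - y j) = 0 := Finset.prod_eq_zero (Finset.mem_univ m) (sub_self _)
        rw [h0, zero_add] at h
        rw [Ae]
        linear_combination -h
      rw [Polynomial.eval_add, interp_eval_node]
      have hkey : (y m) ^ 2 * (zv x y m * Bd y m + g.eval (y m)) = 0 := by
        rw [mul_add, hgm, zv]
        field_simp [Bd_ne hyinj m, hy m]
        ring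
      rcases mul_eq_zero.mp hkey with h' | h'
      · exact absurd h' hym2
      · exact h'
    · rw [Finset.card_image_of_injective _ hyinj, Finset.card_univ, Fintype.card_fin]
      have h1 := interp_natDegree y (zv x y)
      have h2 := Polynomial.natDegree_add_le (interp y (zv x y)) g
      have h4 := h2.trans (max_le h1 hgdeg)
      omega
  rw [hg, ← mul_add, hsum, mul_zero]

lemma E2 (hN : 0 < N) (hyinj : Function.Injective y) (hx : ∀ i, x i ≠ 0)
    (hy : ∀ j, y j ≠ 0) (hxy : ∀ i j, x i ≠ y j) (i : Fin N) :
    ∑ j, zv x y j / (y j - x i) = 1 / (x i) ^ 2 := by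
  have hQ := Q2zero hN hyinj hx hy hxy
  have heval := congrArg (Polynomial.eval (x i)) hQ
  simp only [Polynomial.eval_add, Polynomial.eval_mul, Polynomial.eval_pow,
    Polynomial.eval_X, Polynomial.eval_C, Polynomial.eval_zero, eval_PBp] at heval
  have h0 : ∏ k, (x i - x k) = 0 := Finset.prod_eq_zero (Finset.mem_univ i) (sub_self _)
  rw [h0, zero_mul, add_zero] at heval
  have hp := pairing y (zv x y) (x i) (fun k => Ne.symm (hxy i k))
  apply mul_left_cancel₀ (PBx_ne hxy i)
  rw [hp, mul_one_div, eq_div_iff (pow_ne_zero 2 (hx i))]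
  linear_combination -heval

lemma sumAeBd (hN : 0 < N) (hyinj : Function.Injective y) :
    ∑ j, Ae x y j / Bd y j = (∑ j, y j) - ∑ i, x i := by
  have hA1 : (PBp x).coeff N = 1 := by
    have h := (monic_PBp x).coeff_natDegree; rwa [natDegree_PBp] at h
  have hB1 : (PBp y).coeff N = 1 := by
    have h := (monic_PBp y).coeff_natDegree; rwa [natDegree_PBp] at h
  have hp3 : interp y (fun j => Ae x y j / Bd y j) = PBp x - PBp y := by
    rw [← sub_eq_zero]
    apply Polynomial.eq_zero_of_natDegree_lt_card_of_eval_eq_zero' _ (univ.image y)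
    · intro r hr
      obtain ⟨m, -, rfl⟩ := Finset.mem_image.mp hr
      rw [Polynomial.eval_sub, Polynomial.eval_sub, interp_eval_node, eval_PBp, eval_PBp]
      have h0 : ∏ j, (y m - y j) = 0 := Finset.prod_eq_zero (Finset.mem_univ m) (sub_self _)
      rw [h0, sub_zero, div_mul_cancel₀ _ (Bd_ne hyinj m), Ae, sub_self]
    · rw [Finset.card_image_of_injective _ hyinj, Finset.card_univ, Fintype.card_fin]
      have h1 := interp_natDegree y (fun j => Ae x y j / Bd y j)
      have h2 : (PBp x - PBp y).natDegree ≤ N - 1 := by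
        apply natDegree_le_pred (n := N)
        · refine (Polynomial.natDegree_sub_le _ _).trans ?_
          rw [max_le_iff, natDegree_PBp, natDegree_PBp]
          omega
        · rw [Polynomial.coeff_sub, hA1, hB1, sub_self]
      have h3 := Polynomial.natDegree_sub_le (interp y (fun j => Ae x y j / Bd y j))
        (PBp x - PBp y)
      have h4 := h3.trans (max_le h1 h2)
      omega
  have hc := congrArg (fun p : Polynomial ℂ => p.coeff (N - 1)) hp3
  rw [interp_coeff, Polynomial.coeff_sub] at hc
  have hA : (PBp x).coeff (N - 1) = -∑ i, x i := by
    have h := Polynomial.prod_X_sub_C_nextCoeff (s := (univ : Finset (Fin N))) x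
    rw [Polynomial.nextCoeff_of_natDegree_pos] at h
    · rw [← PBp] at h
      rwa [natDegree_PBp] at h
    · rw [← PBp, natDegree_PBp]; exact hN
  have hB : (PBp y).coeff (N - 1) = -∑ j, y j := by
    have h := Polynomial.prod_X_sub_C_nextCoeff (s := (univ : Finset (Fin N))) y
    rw [Polynomial.nextCoeff_of_natDegree_pos] at h
    · rw [← PBp] at h
      rwa [natDegree_PBp] at h
    · rw [← PBp, natDegree_PBp]; exact hN
  rw [hA, hB] at hc
  linear_combination hc

lemma E4 (hN : 0 < N) (hyinj : Function.Injective y) (hx : ∀ i, x i ≠ 0)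
    (hy : ∀ j, y j ≠ 0) (hxy : ∀ i j, x i ≠ y j) :
    ∑ j, y j * zv x y j
      = PPd x y - 1 - PPd x y * S1v x y * (∑ i, (x i - y i)) := by
  have hterm : ∀ j, y j * zv x y j
      = wv x y j + (PPd x y * S1v x y) * (Ae x y j / Bd y j) := by
    intro j
    rw [zv, wv]
    field_simp [hy j, Bd_ne hyinj j]
    ring
  rw [Finset.sum_congr rfl (fun j _ => hterm j), Finset.sum_add_distrib,
    E3 hN hyinj hx hy hxy, ← Finset.mul_sum, sumAeBd hN hyinj]
  have hS2 : (∑ i, (x i - y i)) = (∑ i, x i) - ∑ i, y i := Finset.sum_sub_distrib _ _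
  rw [hS2]
  ring

end S8

open S8 in
theorem stmt8 (N : ℕ) (x y : Fin N → ℂ)
    (hxinj : Function.Injective x) (hyinj : Function.Injective y)
    (hx : ∀ i, x i ≠ 0) (hy : ∀ j, y j ≠ 0)
    (hxy : ∀ i j, x i ≠ y j) (u : ℂ) :
    Matrix.det (Matrix.of fun i j : Fin N =>
        1 / (y j - x i) + u / x i + u * y j / (x i) ^ 2)
    = Matrix.det (Matrix.of fun i j : Fin N => 1 / (y j - x i)) *
      (1 - 2 * u * (1 - ∏ i, y i / x i)
        - (u - u ^ 2) * (∏ i, y i / x i) *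
            (∑ i, (1 / x i - 1 / y i)) * (∑ i, (x i - y i))
        + u ^ 2 * ((∏ i, y i / x i) - 1) ^ 2) := by
  rcases Nat.eq_zero_or_pos N with rfl | hN
  · simp [Matrix.det_isEmpty]
  have hyx : ∀ i j, y j - x i ≠ 0 := fun i j => sub_ne_zero.mpr (Ne.symm (hxy i j))
  set C : Matrix (Fin N) (Fin N) ℂ := Matrix.of fun i j => 1 / (y j - x i) with hC
  set U : Matrix (Fin N) (Fin 2) ℂ :=
    Matrix.of fun i t => ![1 / x i, 1 / (x i) ^ 2] t with hU
  set Vt : Matrix (Fin 2) (Fin N) ℂ := Matrix.of fun t j => ![(1 : ℂ), y j] t with hVt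
  set W : Matrix (Fin N) (Fin 2) ℂ :=
    Matrix.of fun j t => ![wv x y j, zv x y j] t with hW
  have hCW : C * W = U := by
    ext i t
    rw [Matrix.mul_apply]
    fin_cases t
    · simp only [hC, hU, hW, Matrix.of_apply, Matrix.cons_val_zero]
      rw [← E1 hN hyinj hx hy hxy i]
      exact Finset.sum_congr rfl fun j _ => by
        simp only [Fin.mk_zero, Fin.mk_one, Matrix.cons_val_zero, Matrix.cons_val_one,
          Matrix.head_cons]
        ring
    · simp only [hC, hU, hW, Matrix.of_apply, Matrix.cons_val_one, Matrix.head_cons]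
      rw [← E2 hN hyinj hx hy hxy i]
      exact Finset.sum_congr rfl fun j _ => by
        simp only [Fin.mk_zero, Fin.mk_one, Matrix.cons_val_zero, Matrix.cons_val_one,
          Matrix.head_cons]
        ring
  have hdetC : C.det ≠ 0 := E5 hN hxinj hyinj hxy
  have chain : ∀ v : ℂ, (C + v • (U * Vt)).det
      = C.det * ((1 + v * (∑ j, wv x y j)) * (1 + v * (∑ j, y j * zv x y j))
        - (v * (∑ j, zv x y j)) * (v * (∑ j, y j * wv x y j))) := by
    intro v
    have h1 : C + v • (U * Vt) = C * (1 + v • (W * Vt)) := by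
      rw [Matrix.mul_add, Matrix.mul_one, Matrix.mul_smul, ← Matrix.mul_assoc, hCW]
    rw [h1, Matrix.det_mul]
    congr 1
    have h2 : (1 + v • (W * Vt) : Matrix (Fin N) (Fin N) ℂ) = 1 + (v • W) * Vt := by
      rw [Matrix.smul_mul]
    rw [h2, Matrix.det_one_add_mul_comm, Matrix.mul_smul, Matrix.det_fin_two]
    have hK : ∀ (t s : Fin 2), (Vt * W) t s
        = ∑ j, (![(1 : ℂ), y j] t) * (![wv x y j, zv x y j] s) := by
      intro t s
      rw [Matrix.mul_apply]
      exact Finset.sum_congr rfl fun j _ => by simp [hVt, hW]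
    simp only [Matrix.add_apply, Matrix.smul_apply, smul_eq_mul,
      Matrix.one_apply_eq, Matrix.one_apply_ne (by decide : (0 : Fin 2) ≠ 1),
      Matrix.one_apply_ne (by decide : (1 : Fin 2) ≠ 0), hK,
      Matrix.cons_val_zero, Matrix.cons_val_one, Matrix.head_cons, one_mul]
    ring
  have hAeq : (Matrix.of fun i j : Fin N => 1 / (y j - x i) + u / x i + u * y j / (x i) ^ 2)
      = C + u • (U * Vt) := by
    ext i j
    simp only [hC, hU, hVt, Matrix.of_apply, Matrix.add_apply, Matrix.smul_apply,
      Matrix.mul_apply, Fin.sum_univ_two, Matrix.cons_val_zero, Matrix.cons_val_one,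
      Matrix.head_cons, smul_eq_mul]
    ring
  have hu1 : (C + (1:ℂ) • (U * Vt)).det = C.det * (PPd x y) ^ 2 := by
    have hstep : C + (1:ℂ) • (U * Vt) = Matrix.of (fun i j =>
        (1 / (x i) ^ 2) * ((Matrix.of fun i j : Fin N => (y j) ^ 2 * C i j) i j)) := by
      ext i j
      simp only [hC, hU, hVt, Matrix.of_apply, Matrix.add_apply, Matrix.smul_apply,
        Matrix.mul_apply, Fin.sum_univ_two, Matrix.cons_val_zero, Matrix.cons_val_one,
        Matrix.head_cons, smul_eq_mul, one_mul]
      field_simp [hx i, hyx i j]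
      ring
    rw [hstep, Matrix.det_mul_column, Matrix.det_mul_row]
    have hPP2 : (∏ i, 1 / (x i) ^ 2) * (∏ j, (y j) ^ 2) = (PPd x y) ^ 2 := by
      rw [PPd, ← Finset.prod_mul_distrib, ← Finset.prod_pow]
      refine Finset.prod_congr rfl fun i _ => ?_
      rw [div_pow]
      field_simp
    rw [← mul_assoc, hPP2]
    ring
  have hKdet : (1 + ∑ j, wv x y j) * (1 + ∑ j, y j * zv x y j)
      - (∑ j, zv x y j) * (∑ j, y j * wv x y j) = (PPd x y) ^ 2 := by
    apply mul_left_cancel₀ hdetC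
    rw [← hu1, chain 1]
    ring
  rw [hAeq, chain u, E3 hN hyinj hx hy hxy, E4 hN hyinj hx hy hxy]
  rw [E3 hN hyinj hx hy hxy, E4 hN hyinj hx hy hxy] at hKdet
  rw [PPd] at hKdet ⊢
  rw [S1v] at hKdet ⊢
  linear_combination (C.det * u ^ 2) * hKdet
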